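/- arXiv:2201.05947 — 2 statements merged into one kernel-verified Lean document; each statement's English description precedes it below -/
import Mathlib

section
/- Let μ be Lebesgue measure on [0,1], let A ⊆ [0,1] be measurable, let p, n, i be positive integers with p > n + 2i, and let D be uniform on the dyadics of order p (i.e., uniform on {j/2^p : 0 ≤ j ≤ 2^p, j odd}) and U uniform on [0,1], independent of D. Define X = D + (U − D)/(2^n 4^i). Then |P(X ∈ A) − μ(A)| ≤ 2^{-(p−1−n−2i)} + 1/(2^{n+2i} − 1). -/
open MeasureTheory ENNReal

lemma odd_card_le (S : Finset ℕ) (hodd : ∀ j ∈ S, Odd j) (L : ℕ)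
    (hgap : ∀ j ∈ S, ∀ k ∈ S, k - j ≤ 2 * L) : S.card ≤ L + 1 := by
  rcases S.eq_empty_or_nonempty with h | h
  · simp [h]
  have hmem := S.min'_mem h
  calc S.card ≤ (Finset.range (L + 1)).card := by
        apply Finset.card_le_card_of_injOn (fun j => (j - S.min' h) / 2)
        · intro j hj
          have h1 := hgap (S.min' h) hmem j hj
          simp only [Finset.mem_coe, Finset.mem_range]
          omega
        · intro j hj k hk hjk
          have h1 := S.min'_le j hj
          have h2 := S.min'_le k hk
          obtain ⟨a, ha⟩ := hodd j hj
          obtain ⟨b, hb⟩ := hodd k hk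
          obtain ⟨c, hc⟩ := hodd _ hmem
          simp only at hjk
          omega
    _ = L + 1 := Finset.card_range _

lemma card_odd_range (k : ℕ) :
    ((Finset.range (2 * k)).filter (fun j => Odd j)).card = k := by
  induction k with
  | zero => simp
  | succ k ih =>
    have h2 : 2 * (k + 1) = (2 * k + 1) + 1 := by ring
    rw [h2, Finset.range_add_one, Finset.filter_insert, Finset.range_add_one, Finset.filter_insert]
    have ho : Odd (2 * k + 1) := by rw [Nat.odd_iff]; omega
    have he : ¬ Odd (2 * k) := by rw [Nat.odd_iff]; omega
    rw [if_pos ho, if_neg he, Finset.card_insert_of_notMem, ih]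
    simp [Finset.mem_filter, Finset.mem_range]

lemma vol_affine_preimage (M : ℝ) (hM : 0 < M) (c : ℝ) (B : Set ℝ) :
    volume ((fun u : ℝ => c + u / M) ⁻¹' B) = ENNReal.ofReal M * volume B := by
  have h : (fun u : ℝ => c + u / M) ⁻¹' B
      = (fun u : ℝ => M⁻¹ * u) ⁻¹' ((fun y : ℝ => c + y) ⁻¹' B) := by
    ext u; simp [div_eq_inv_mul]
  rw [h, Real.volume_preimage_mul_left (by positivity : (M : ℝ)⁻¹ ≠ 0),
    measure_preimage_add, inv_inv, abs_of_pos hM]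

lemma vol_restrict_affine (M : ℝ) (hM : 1 ≤ M) (c : ℝ) (B : Set ℝ) (hB : MeasurableSet B) :
    (volume.restrict (Set.Icc (0:ℝ) 1)) ((fun u : ℝ => c + u / M) ⁻¹' B)
      = ENNReal.ofReal M * volume (B ∩ Set.Icc c (c + 1 / M)) := by
  have hM0 : (0:ℝ) < M := lt_of_lt_of_le one_pos hM
  have hmeas : Measurable (fun u : ℝ => c + u / M) := by fun_prop
  rw [Measure.restrict_apply (hmeas hB)]
  have hset : (fun u : ℝ => c + u / M) ⁻¹' B ∩ Set.Icc 0 1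
      = (fun u : ℝ => c + u / M) ⁻¹' (B ∩ Set.Icc c (c + 1 / M)) := by
    ext u
    simp only [Set.mem_inter_iff, Set.mem_preimage, Set.mem_Icc]
    constructor
    · rintro ⟨hu, h0, h1⟩
      refine ⟨hu, le_add_of_nonneg_right (by positivity), ?_⟩
      have : u / M ≤ 1 / M := (div_le_div_iff_of_pos_right hM0).mpr h1
      linarith
    · rintro ⟨hu, h0, h1⟩
      refine ⟨hu, ?_, ?_⟩
      · have : (0:ℝ) / M ≤ u / M := by
          rw [zero_div]; linarith
        exact (div_le_div_iff_of_pos_right hM0).mp this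
      · have : u / M ≤ 1 / M := by linarith
        exact (div_le_div_iff_of_pos_right hM0).mp this
  rw [hset, vol_affine_preimage M hM0 c _]

lemma count_bound (M N pp : ℕ) (hM : 2 ≤ M) (h2 : 2 ^ pp = 2 * N)
    (J : Finset ℕ) (hJ : ∀ j ∈ J, Odd j) (x : ℝ) :
    ∑ j ∈ J, (Set.Icc ((1 - 1/(M:ℝ)) * ((j:ℝ)/2^pp))
        ((1 - 1/(M:ℝ)) * ((j:ℝ)/2^pp) + 1/(M:ℝ))).indicator (1 : ℝ → ℝ≥0∞) x
      ≤ (N:ℝ≥0∞)/(((M:ℕ):ℝ≥0∞)-1) + 1 := by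
  classical
  rw [show ∑ j ∈ J, (Set.Icc ((1 - 1/(M:ℝ)) * ((j:ℝ)/2^pp))
        ((1 - 1/(M:ℝ)) * ((j:ℝ)/2^pp) + 1/(M:ℝ))).indicator (1 : ℝ → ℝ≥0∞) x
      = ((J.filter (fun j : ℕ => x ∈ Set.Icc ((1 - 1/(M:ℝ)) * ((j:ℝ)/2^pp))
        ((1 - 1/(M:ℝ)) * ((j:ℝ)/2^pp) + 1/(M:ℝ)))).card : ℝ≥0∞) from by
      simp only [Set.indicator_apply, Pi.one_apply]
      rw [Finset.sum_boole]]
  set L : ℕ := N / (M - 1) with hL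
  have hM0 : (0:ℝ) < (M:ℝ) := by positivity
  have hMne : (M:ℝ) ≠ 0 := ne_of_gt hM0
  have hp2 : ((2:ℝ)^pp) ≠ 0 := by positivity
  have hcard : (J.filter (fun j : ℕ => x ∈ Set.Icc ((1 - 1/(M:ℝ)) * ((j:ℝ)/2^pp))
      ((1 - 1/(M:ℝ)) * ((j:ℝ)/2^pp) + 1/(M:ℝ)))).card ≤ L + 1 := by
    apply odd_card_le
    · intro j hj
      exact hJ j (Finset.mem_filter.mp hj).1
    · intro j hj k hk
      rcases le_or_gt k j with h | hjk
      · omega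
      have hxj := (Finset.mem_filter.mp hj).2
      have hxk := (Finset.mem_filter.mp hk).2
      simp only [Set.mem_Icc] at hxj hxk
      have hineq : (1 - 1/(M:ℝ)) * ((k:ℝ)/2^pp)
          ≤ (1 - 1/(M:ℝ)) * ((j:ℝ)/2^pp) + 1/(M:ℝ) := le_trans hxk.1 hxj.2
      have treal : ((M:ℝ) - 1) * ((k:ℝ) - (j:ℝ)) ≤ 2^pp := by
        have h' := mul_le_mul_of_nonneg_left hineq
          (le_of_lt (mul_pos hM0 (by positivity : (0:ℝ) < 2^pp)))
        have e1 : (M:ℝ) * 2^pp * ((1 - 1/(M:ℝ)) * ((k:ℝ)/2^pp)) = ((M:ℝ) - 1) * k := by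
          field_simp
        have e2 : (M:ℝ) * 2^pp * ((1 - 1/(M:ℝ)) * ((j:ℝ)/2^pp) + 1/(M:ℝ))
            = ((M:ℝ) - 1) * j + 2^pp := by
          field_simp
        rw [e1, e2] at h'
        nlinarith
      have hnat : (M - 1) * (k - j) ≤ 2 ^ pp := by
        rw [← Nat.cast_le (α := ℝ)]
        push_cast [Nat.cast_sub (by omega : 1 ≤ M), Nat.cast_sub hjk.le]
        linarith
      obtain ⟨t, ht⟩ := Nat.Odd.sub_odd (hJ k (Finset.mem_filter.mp hk).1)
        (hJ j (Finset.mem_filter.mp hj).1)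
      have hx2 : (M - 1) * t ≤ N := by
        rw [ht, Nat.mul_add, h2] at hnat
        linarith
      have ht2 : t ≤ L := by
        rw [hL, Nat.le_div_iff_mul_le (by omega : 0 < M - 1)]
        calc t * (M - 1) = (M - 1) * t := Nat.mul_comm _ _
          _ ≤ N := hx2
      omega
  have hsub : ((M:ℕ):ℝ≥0∞) - 1 = ((M - 1 : ℕ):ℝ≥0∞) := by
    rw [ENNReal.natCast_sub]; norm_num
  calc ((J.filter (fun j : ℕ => x ∈ Set.Icc ((1 - 1/(M:ℝ)) * ((j:ℝ)/2^pp))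
        ((1 - 1/(M:ℝ)) * ((j:ℝ)/2^pp) + 1/(M:ℝ)))).card : ℝ≥0∞)
      ≤ ((L:ℕ):ℝ≥0∞) + 1 := by exact_mod_cast hcard
    _ ≤ (N:ℝ≥0∞)/(((M:ℕ):ℝ≥0∞)-1) + 1 := by
        gcongr
        rw [hsub, ENNReal.le_div_iff_mul_le
          (Or.inl (by exact_mod_cast (by omega : M - 1 ≠ 0)))
          (Or.inl (ENNReal.natCast_ne_top _)), ← Nat.cast_mul]
        exact_mod_cast Nat.div_mul_le_self N (M - 1)

lemma sum_bound (J : Finset ℕ) (II : ℕ → Set ℝ) (hII : ∀ j, MeasurableSet (II j))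
    (K : ℝ≥0∞) (hcount : ∀ x : ℝ, ∑ j ∈ J, (II j).indicator (1 : ℝ → ℝ≥0∞) x ≤ K)
    (B : Set ℝ) (hB : MeasurableSet B) :
    ∑ j ∈ J, volume (B ∩ II j) ≤ K * volume B := by
  calc ∑ j ∈ J, volume (B ∩ II j)
      = ∑ j ∈ J, ∫⁻ x, (II j).indicator (1 : ℝ → ℝ≥0∞) x ∂(volume.restrict B) := by
        refine Finset.sum_congr rfl fun j hj => ?_
        rw [lintegral_indicator_one (hII j), Measure.restrict_apply (hII j), Set.inter_comm]
    _ = ∫⁻ x, ∑ j ∈ J, (II j).indicator (1 : ℝ → ℝ≥0∞) x ∂(volume.restrict B) :=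
        (lintegral_finset_sum _ (fun j _ => measurable_one.indicator (hII j))).symm
    _ ≤ ∫⁻ _, K ∂(volume.restrict B) := lintegral_mono fun x => hcount x
    _ = K * volume B := by
        rw [lintegral_const, Measure.restrict_apply_univ]

lemma ennreal_alg (M N : ℕ) (hM : 2 ≤ M) (hN : 1 ≤ N) (v : ℝ≥0∞) (hv : v ≤ 1) :
    ((N:ℝ≥0∞))⁻¹ * ((M:ℝ≥0∞) * (((N:ℝ≥0∞)/(((M:ℕ):ℝ≥0∞)-1) + 1) * v))
      ≤ v + ((((M:ℕ):ℝ≥0∞)-1)⁻¹ + (M:ℝ≥0∞) * ((N:ℝ≥0∞))⁻¹) := by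
  have hNne : (N:ℝ≥0∞) ≠ 0 := by exact_mod_cast (by omega : N ≠ 0)
  have hNtop : (N:ℝ≥0∞) ≠ ⊤ := ENNReal.natCast_ne_top _
  have hsubc : ((M:ℕ):ℝ≥0∞) - 1 = ((M - 1 : ℕ):ℝ≥0∞) := by
    rw [ENNReal.natCast_sub]; norm_num
  have hane : ((M:ℕ):ℝ≥0∞) - 1 ≠ 0 := by
    rw [hsubc]; exact_mod_cast (by omega : M - 1 ≠ 0)
  have hatop : ((M:ℕ):ℝ≥0∞) - 1 ≠ ⊤ := by
    rw [hsubc]; exact ENNReal.natCast_ne_top _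
  set a : ℝ≥0∞ := ((M:ℕ):ℝ≥0∞) - 1 with ha
  have hsplit : ((M:ℕ):ℝ≥0∞) = a + 1 := by
    rw [ha, tsub_add_cancel_of_le (by exact_mod_cast (by omega : 1 ≤ M))]
  rw [hsplit]
  have r1 : (N:ℝ≥0∞)⁻¹ * (N:ℝ≥0∞) = 1 := ENNReal.inv_mul_cancel hNne hNtop
  have r2 : a⁻¹ * a = 1 := ENNReal.inv_mul_cancel hane hatop
  have hmul : ∀ x : ℝ≥0∞, x * v ≤ x := fun x => by
    calc x * v ≤ x * 1 := by gcongr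
      _ = x := mul_one x
  calc (N:ℝ≥0∞)⁻¹ * ((a + 1) * (((N:ℝ≥0∞)/a + 1) * v))
      = ((N:ℝ≥0∞)⁻¹ * (N:ℝ≥0∞)) * ((a⁻¹ * a) * v) + ((N:ℝ≥0∞)⁻¹ * (N:ℝ≥0∞)) * (a⁻¹ * v)
        + ((a + 1) * (N:ℝ≥0∞)⁻¹ * v) := by
        rw [div_eq_mul_inv]; ring
    _ = v + a⁻¹ * v + (a + 1) * (N:ℝ≥0∞)⁻¹ * v := by
        rw [r1, r2]; simp only [one_mul]
    _ ≤ v + (a⁻¹ + (a + 1) * (N:ℝ≥0∞)⁻¹) := by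
        rw [add_assoc]
        exact add_le_add le_rfl (add_le_add (hmul _) (hmul _))
/-- If `D` is uniform on the dyadics of order `p` (odd numerator, denominator
`2^p`), `U` is uniform on `[0,1]` and independent of `D`, `p > n + 2i`, and
`X = D + (U − D)/(2^n 4^i)`, then `|P(X ∈ A) − μ(A)| ≤ 2^{-(p−1−n−2i)} + 1/(2^{n+2i}−1)`
for every measurable `A ⊆ [0,1]`, where `μ` is Lebesgue measure. -/
theorem stmt_6 {Ω : Type*} [MeasurableSpace Ω] (P : Measure Ω) [IsProbabilityMeasure P]
    (p n i : ℕ) (hn : 0 < n) (hi : 0 < i) (hp : n + 2 * i < p)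
    (A : Set ℝ) (hA : MeasurableSet A) (hAsub : A ⊆ Set.Icc 0 1)
    (D U : Ω → ℝ) (hD : Measurable D) (hU : Measurable U)
    (hindep : ProbabilityTheory.IndepFun D U P)
    (hDlaw : Measure.map D P =
      ((2 : ℝ≥0∞) ^ (p - 1))⁻¹ •
        ∑ j ∈ (Finset.range (2 ^ p + 1)).filter (fun j => Odd j),
          Measure.dirac ((j : ℝ) / 2 ^ p))
    (hUlaw : Measure.map U P = volume.restrict (Set.Icc 0 1)) :
    |(P {ω | D ω + (U ω - D ω) / (2 ^ n * 4 ^ i) ∈ A}).toReal - (volume A).toReal|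
      ≤ 1 / 2 ^ (p - 1 - n - 2 * i) + 1 / (2 ^ (n + 2 * i) - 1) := by
  classical
  set M : ℕ := 2 ^ (n + 2 * i) with hMdef
  set N : ℕ := 2 ^ (p - 1) with hNdef
  set J : Finset ℕ := (Finset.range (2 ^ p + 1)).filter (fun j => Odd j) with hJdef
  have hM1 : 1 ≤ M := Nat.one_le_two_pow
  have hM2 : 2 ≤ M := by
    rw [hMdef]
    calc 2 = 2 ^ 1 := (pow_one 2).symm
      _ ≤ 2 ^ (n + 2 * i) := Nat.pow_le_pow_right (by norm_num) (by omega)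
  have hN1 : 1 ≤ N := Nat.one_le_two_pow
  have hMR : (1:ℝ) ≤ (M:ℝ) := by exact_mod_cast hM1
  have hsubE : ((M:ℕ):ℝ≥0∞) - 1 = ((M - 1 : ℕ):ℝ≥0∞) := by
    rw [ENNReal.natCast_sub]; norm_num
  have h2N : 2 ^ p = 2 * N := by
    rw [hNdef, ← pow_succ']
    congr 1
    omega
  have h24 : ((2:ℝ) ^ n * 4 ^ i) = (M:ℝ) := by
    rw [hMdef]; push_cast
    rw [show (4:ℝ) = 2 ^ 2 by norm_num, ← pow_mul, ← pow_add]
  have harith : ∀ d u : ℝ, d + (u - d) / ((2:ℝ) ^ n * 4 ^ i)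
      = (1 - 1 / (M:ℝ)) * d + u / (M:ℝ) := by
    intro d u
    rw [h24]
    have hMne : (M:ℝ) ≠ 0 := by positivity
    field_simp
    ring
  have hg : Measurable (fun q : ℝ × ℝ => q.1 + (q.2 - q.1) / ((2:ℝ) ^ n * 4 ^ i)) := by
    fun_prop
  have hNcast : ((N:ℕ) : ℝ≥0∞) = (2 : ℝ≥0∞) ^ (p - 1) := by
    rw [hNdef]; push_cast; rfl
  have hpair : Measure.map (fun ω => (D ω, U ω)) P
      = (Measure.map D P).prod (Measure.map U P) :=
    (ProbabilityTheory.indepFun_iff_map_prod_eq_prod_map_map hD.aemeasurable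
      hU.aemeasurable).mp hindep
  -- the key formula
  have hF : ∀ B : Set ℝ, MeasurableSet B →
      P {ω | D ω + (U ω - D ω) / (2 ^ n * 4 ^ i) ∈ B}
        = ((N : ℕ) : ℝ≥0∞)⁻¹ * ∑ j ∈ J, ENNReal.ofReal M *
            volume (B ∩ Set.Icc ((1 - 1 / (M:ℝ)) * ((j:ℝ) / 2 ^ p))
              ((1 - 1 / (M:ℝ)) * ((j:ℝ) / 2 ^ p) + 1 / (M:ℝ))) := by
    intro B hB
    have h1 : {ω | D ω + (U ω - D ω) / (2 ^ n * 4 ^ i) ∈ B}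
        = (fun ω => (D ω, U ω)) ⁻¹'
          ((fun q : ℝ × ℝ => q.1 + (q.2 - q.1) / ((2:ℝ) ^ n * 4 ^ i)) ⁻¹' B) := rfl
    rw [h1, ← Measure.map_apply (hD.prodMk hU) (hg hB), hpair, hUlaw,
      Measure.prod_apply (hg hB), hDlaw, lintegral_smul_measure,
      lintegral_finset_sum_measure, hNcast]
    congr 1
    refine Finset.sum_congr rfl fun j hj => ?_
    rw [lintegral_dirac' _ (measurable_measure_prodMk_left (hg hB))]
    have hpre : Prod.mk ((j:ℝ) / 2 ^ p) ⁻¹'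
        ((fun q : ℝ × ℝ => q.1 + (q.2 - q.1) / ((2:ℝ) ^ n * 4 ^ i)) ⁻¹' B)
        = (fun u : ℝ => (1 - 1 / (M:ℝ)) * ((j:ℝ) / 2 ^ p) + u / (M:ℝ)) ⁻¹' B := by
      ext u
      simp only [Set.mem_preimage]
      rw [harith]
    rw [hpre, vol_restrict_affine (M:ℝ) hMR _ B hB]
  -- each interval is inside [0,1]
  have hIsub : ∀ j ∈ J, Set.Icc ((1 - 1 / (M:ℝ)) * ((j:ℝ) / 2 ^ p))
      ((1 - 1 / (M:ℝ)) * ((j:ℝ) / 2 ^ p) + 1 / (M:ℝ)) ⊆ Set.Icc (0:ℝ) 1 := by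
    intro j hj
    have hjle : (j:ℝ) ≤ 2 ^ p := by
      have := Finset.mem_range.mp (Finset.mem_filter.mp hj).1
      exact_mod_cast Nat.le_of_lt_succ this
    have hd1 : (j:ℝ) / 2 ^ p ≤ 1 := by
      rw [div_le_one (by positivity)]; exact hjle
    have hd0 : (0:ℝ) ≤ (j:ℝ) / 2 ^ p := by positivity
    have hc0 : (0:ℝ) ≤ (1 - 1 / (M:ℝ)) * ((j:ℝ) / 2 ^ p) := by
      apply mul_nonneg _ hd0
      have : 1 / (M:ℝ) ≤ 1 := by
        rw [div_le_one (by positivity)]; exact hMR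
      linarith
    apply Set.Icc_subset_Icc hc0
    have : (1 - 1 / (M:ℝ)) * ((j:ℝ) / 2 ^ p) ≤ (1 - 1 / (M:ℝ)) * 1 := by
      apply mul_le_mul_of_nonneg_left hd1
      have : 1 / (M:ℝ) ≤ 1 := by
        rw [div_le_one (by positivity)]; exact hMR
      linarith
    linarith
  -- total mass is 1
  have hcardJ : J.card = N := by
    rw [hJdef, h2N, Finset.range_add_one, Finset.filter_insert,
      if_neg (by rw [Nat.odd_iff]; omega), card_odd_range]
  have h1tot : P {ω | D ω + (U ω - D ω) / (2 ^ n * 4 ^ i) ∈ Set.Icc (0:ℝ) 1} = 1 := by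
    rw [hF _ measurableSet_Icc]
    have : ∀ j ∈ J, ENNReal.ofReal M *
        volume (Set.Icc (0:ℝ) 1 ∩ Set.Icc ((1 - 1 / (M:ℝ)) * ((j:ℝ) / 2 ^ p))
          ((1 - 1 / (M:ℝ)) * ((j:ℝ) / 2 ^ p) + 1 / (M:ℝ))) = 1 := by
      intro j hj
      rw [Set.inter_eq_right.mpr (hIsub j hj), Real.volume_Icc,
        show (1 - 1 / (M:ℝ)) * ((j:ℝ) / 2 ^ p) + 1 / (M:ℝ)
          - (1 - 1 / (M:ℝ)) * ((j:ℝ) / 2 ^ p) = 1 / (M:ℝ) by ring,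
        ← ENNReal.ofReal_mul (by positivity), mul_one_div_cancel (by positivity : (M:ℝ) ≠ 0),
        ENNReal.ofReal_one]
    rw [Finset.sum_congr rfl this, Finset.sum_const, hcardJ, nsmul_eq_mul, mul_one]
    exact ENNReal.inv_mul_cancel (by exact_mod_cast (by omega : N ≠ 0))
      (ENNReal.natCast_ne_top _)
  -- the one-sided bound
  set eE : ℝ≥0∞ := (((M:ℕ):ℝ≥0∞) - 1)⁻¹ + (M:ℝ≥0∞) * ((N:ℝ≥0∞))⁻¹ with heE
  have hbound : ∀ B : Set ℝ, MeasurableSet B → B ⊆ Set.Icc (0:ℝ) 1 →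
      P {ω | D ω + (U ω - D ω) / (2 ^ n * 4 ^ i) ∈ B} ≤ volume B + eE := by
    intro B hB hBsub
    have hvol1 : volume B ≤ 1 := by
      calc volume B ≤ volume (Set.Icc (0:ℝ) 1) := measure_mono hBsub
        _ = 1 := by rw [Real.volume_Icc]; norm_num
    rw [hF B hB]
    simp only [ENNReal.ofReal_natCast]
    rw [← Finset.mul_sum]
    calc ((N:ℕ):ℝ≥0∞)⁻¹ * ((M:ℝ≥0∞) * ∑ j ∈ J,
          volume (B ∩ Set.Icc ((1 - 1 / (M:ℝ)) * ((j:ℝ) / 2 ^ p))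
            ((1 - 1 / (M:ℝ)) * ((j:ℝ) / 2 ^ p) + 1 / (M:ℝ))))
        ≤ ((N:ℕ):ℝ≥0∞)⁻¹ * ((M:ℝ≥0∞) *
            (((N:ℝ≥0∞)/(((M:ℕ):ℝ≥0∞)-1) + 1) * volume B)) := by
          gcongr
          exact sum_bound J _ (fun j => measurableSet_Icc) _
            (fun x => count_bound M N p hM2 h2N J
              (fun j hj => (Finset.mem_filter.mp hj).2) x) B hB
      _ ≤ volume B + eE := ennreal_alg M N hM2 hN1 (volume B) hvol1
  -- assemble
  set B : Set ℝ := Set.Icc (0:ℝ) 1 \ A with hBdef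
  have hBmeas : MeasurableSet B := measurableSet_Icc.diff hA
  have hABun : A ∪ B = Set.Icc (0:ℝ) 1 := Set.union_diff_cancel hAsub
  have hABdisj : Disjoint A B := Set.disjoint_sdiff_right
  have hXmeas : Measurable (fun ω => D ω + (U ω - D ω) / ((2:ℝ) ^ n * 4 ^ i)) := by
    fun_prop
  have hPsum : P {ω | D ω + (U ω - D ω) / (2 ^ n * 4 ^ i) ∈ A}
      + P {ω | D ω + (U ω - D ω) / (2 ^ n * 4 ^ i) ∈ B} = 1 := by
    rw [show {ω | D ω + (U ω - D ω) / (2 ^ n * 4 ^ i) ∈ A}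
        = (fun ω => D ω + (U ω - D ω) / ((2:ℝ) ^ n * 4 ^ i)) ⁻¹' A from rfl,
      show {ω | D ω + (U ω - D ω) / (2 ^ n * 4 ^ i) ∈ B}
        = (fun ω => D ω + (U ω - D ω) / ((2:ℝ) ^ n * 4 ^ i)) ⁻¹' B from rfl,
      ← measure_union (hABdisj.preimage _) (hXmeas hBmeas), ← Set.preimage_union, hABun]
    exact h1tot
  have hvsum : volume A + volume B = 1 := by
    rw [← measure_union hABdisj hBmeas, hABun, Real.volume_Icc]
    norm_num
  have hPA := hbound A hA hAsub
  have hPB := hbound B hBmeas Set.diff_subset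
  -- finiteness
  have hvAne : volume A ≠ ⊤ := by
    intro h; rw [h] at hvsum; simp at hvsum
  have hvBne : volume B ≠ ⊤ := by
    intro h; rw [h] at hvsum; simp [add_comm] at hvsum
  have heEne : eE ≠ ⊤ := by
    rw [heE]
    apply ENNReal.add_ne_top.mpr
    constructor
    · apply ENNReal.inv_ne_top.mpr
      rw [hsubE]
      exact_mod_cast (by omega : M - 1 ≠ 0)
    · exact ENNReal.mul_ne_top (ENNReal.natCast_ne_top _)
        (ENNReal.inv_ne_top.mpr (by exact_mod_cast (by omega : N ≠ 0)))
  have hPAne : P {ω | D ω + (U ω - D ω) / (2 ^ n * 4 ^ i) ∈ A} ≠ ⊤ := measure_ne_top _ _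
  have hPBne : P {ω | D ω + (U ω - D ω) / (2 ^ n * 4 ^ i) ∈ B} ≠ ⊤ := measure_ne_top _ _
  -- toReal versions
  have ha : (P {ω | D ω + (U ω - D ω) / (2 ^ n * 4 ^ i) ∈ A}).toReal
      ≤ (volume A).toReal + eE.toReal := by
    have := ENNReal.toReal_mono (ENNReal.add_ne_top.mpr ⟨hvAne, heEne⟩) hPA
    rwa [ENNReal.toReal_add hvAne heEne] at this
  have hb : (P {ω | D ω + (U ω - D ω) / (2 ^ n * 4 ^ i) ∈ B}).toReal
      ≤ (volume B).toReal + eE.toReal := by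
    have := ENNReal.toReal_mono (ENNReal.add_ne_top.mpr ⟨hvBne, heEne⟩) hPB
    rwa [ENNReal.toReal_add hvBne heEne] at this
  have hsP : (P {ω | D ω + (U ω - D ω) / (2 ^ n * 4 ^ i) ∈ A}).toReal
      + (P {ω | D ω + (U ω - D ω) / (2 ^ n * 4 ^ i) ∈ B}).toReal = 1 := by
    rw [← ENNReal.toReal_add hPAne hPBne, hPsum, ENNReal.toReal_one]
  have hsv : (volume A).toReal + (volume B).toReal = 1 := by
    rw [← ENNReal.toReal_add hvAne hvBne, hvsum, ENNReal.toReal_one]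
  -- compute eE.toReal
  have heEreal : eE.toReal = 1 / 2 ^ (p - 1 - n - 2 * i) + 1 / (2 ^ (n + 2 * i) - 1) := by
    rw [heE, hsubE,
      ENNReal.toReal_add (ENNReal.inv_ne_top.mpr (by exact_mod_cast (by omega : M - 1 ≠ 0)))
        (ENNReal.mul_ne_top (ENNReal.natCast_ne_top _)
          (ENNReal.inv_ne_top.mpr (by exact_mod_cast (by omega : N ≠ 0)))),
      ENNReal.toReal_inv, ENNReal.toReal_mul, ENNReal.toReal_inv]
    simp only [ENNReal.toReal_natCast]
    have hexp : (p - 1 - n - 2 * i) + (n + 2 * i) = p - 1 := by omega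
    have hMval : (M:ℝ) = 2 ^ (n + 2 * i) := by rw [hMdef]; push_cast; ring
    have hNval : (N:ℝ) = 2 ^ (p - 1 - n - 2 * i) * 2 ^ (n + 2 * i) := by
      rw [hNdef]; push_cast
      rw [← pow_add, hexp]
    have hM1R : ((M - 1 : ℕ) : ℝ) = 2 ^ (n + 2 * i) - 1 := by
      push_cast [Nat.cast_sub hM1, hMval]
      ring
    have h1 : (0:ℝ) < 2 ^ (p - 1 - n - 2 * i) := by positivity
    have h3 : (0:ℝ) < 2 ^ (n + 2 * i) - 1 := by
      have : (2:ℝ) ≤ 2 ^ (n + 2 * i) := by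
        calc (2:ℝ) = 2 ^ 1 := (pow_one 2).symm
          _ ≤ 2 ^ (n + 2 * i) := by
            apply pow_le_pow_right₀ (by norm_num) (by omega)
      linarith
    rw [hM1R, hNval, hMval]
    field_simp
    ring
  rw [← heEreal]
  rw [abs_le]
  constructor <;> linarith
end

section
/- Let (X,ρ) be a metric space and consider two 'nearest-neighbor paths' p_d → p_{d−1} → ... → p_0 and q_f → q_{f−1} → ... → q_0 of times (with p_0 < q_0, all times distinct) in a process where at each time the parent is the nearest available previous point, and both path endpoints p_d, q_f remain available throughout. Then, with v(0) = max{i ≤ d : p_i < q_0}, one has ρ(x_{p_{v(0)}}, x_{q_0}) ≤ 2^{f+d}·ρ(x_{p_d}, x_{q_f}) and ρ(x_{p_{v(0)}}, x_{p_d}) ≤ 2^{f+d}·ρ(x_{p_d}, x_{q_f}). -/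
/-- path recursion, Lemma 5: For two nearest-neighbor paths
`p_d → ... → p_0` and `q_f → ... → q_0` with `p_0 < q_0`, where at each step the
parent is at least as close as the relevant point of the other path that is currently
available (with `v(j) = max{i ≤ d : p_i < q_j}` and `u(i) = max{j ≤ f : q_j < p_i}`),
one has `ρ(x_{p_{v(0)}}, x_{q_0}) ≤ 2^{f+d} ρ(x_{p_d}, x_{q_f})` and
`ρ(x_{p_{v(0)}}, x_{p_d}) ≤ 2^{f+d} ρ(x_{p_d}, x_{q_f})`. -/
theorem stmt_15 {X : Type*} [MetricSpace X] (x : ℕ → X)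
    (d f : ℕ) (p q : ℕ → ℕ)
    (hp_mono : ∀ i, 1 ≤ i → i ≤ d → p (i - 1) < p i)
    (hq_mono : ∀ j, 1 ≤ j → j ≤ f → q (j - 1) < q j)
    (hpq0 : p 0 < q 0)
    (hdistinct : ∀ i ≤ d, ∀ j ≤ f, p i ≠ q j)
    (v u : ℕ → ℕ)
    (hv : ∀ j, v j = Nat.findGreatest (fun i => p i < q j) d)
    (hu : ∀ i, u i = Nat.findGreatest (fun j => q j < p i) f)
    (hnn_p : ∀ i, v 0 + 1 ≤ i → i ≤ d →
      dist (x (p i)) (x (p (i - 1))) ≤ dist (x (p i)) (x (q (u i))))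
    (hnn_q : ∀ j, 1 ≤ j → j ≤ f →
      dist (x (q j)) (x (q (j - 1))) ≤ dist (x (q j)) (x (p (v j)))) :
    dist (x (p (v 0))) (x (q 0)) ≤ 2 ^ (f + d) * dist (x (p d)) (x (q f)) ∧
    dist (x (p (v 0))) (x (p d)) ≤ 2 ^ (f + d) * dist (x (p d)) (x (q f)) := by
  set D := dist (x (p d)) (x (q f)) with hDdef
  have hD : 0 ≤ D := dist_nonneg
  -- monotonicity of p and q
  have hp_le : ∀ a b, a ≤ b → b ≤ d → p a ≤ p b := by
    intro a b hab hbd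
    induction b with
    | zero => simp [Nat.le_zero.mp hab]
    | succ n ih =>
      rcases Nat.lt_or_ge a (n + 1) with h | h
      · have h1 : p n < p (n + 1) := by
          have := hp_mono (n + 1) (by omega) hbd
          simpa using this
        exact le_trans (ih (by omega) (by omega)) h1.le
      · have : a = n + 1 := le_antisymm hab h
        simp [this]
  have hq_le : ∀ a b, a ≤ b → b ≤ f → q a ≤ q b := by
    intro a b hab hbf
    induction b with
    | zero => simp [Nat.le_zero.mp hab]
    | succ n ih =>
      rcases Nat.lt_or_ge a (n + 1) with h | h
      · have h1 : q n < q (n + 1) := by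
          have := hq_mono (n + 1) (by omega) hbf
          simpa using this
        exact le_trans (ih (by omega) (by omega)) h1.le
      · have : a = n + 1 := le_antisymm hab h
        simp [this]
  have hp_lt : ∀ a b, a < b → b ≤ d → p a < p b := by
    intro a b hab hbd
    have h1 : p a ≤ p (b - 1) := hp_le a (b - 1) (by omega) (by omega)
    have h2 : p (b - 1) < p b := hp_mono b (by omega) hbd
    omega
  have hq_lt : ∀ a b, a < b → b ≤ f → q a < q b := by
    intro a b hab hbf
    have h1 : q a ≤ q (b - 1) := hq_le a (b - 1) (by omega) (by omega)
    have h2 : q (b - 1) < q b := hq_mono b (by omega) hbf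
    omega
  have hv0d : v 0 ≤ d := by rw [hv]; exact Nat.findGreatest_le d
  have hpv0 : p (v 0) < q 0 := by
    rw [hv]; exact Nat.findGreatest_spec (P := fun i => p i < q 0) (Nat.zero_le d) hpq0
  -- the main descent
  have key : ∀ n i j, i ≤ d → j ≤ f → (d - i) + (f - j) = n →
      (∀ i', i < i' → i' ≤ d → q j < p i') →
      (∀ j', j < j' → j' ≤ f → p i < q j') →
      dist (x (p i)) (x (q j)) ≤ 2 ^ n * D ∧
      dist (x (p i)) (x (p d)) ≤ (2 ^ n - 1) * D := by
    intro n
    induction n with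
    | zero =>
      intro i j hid hjf hn _ _
      have hi : i = d := by omega
      have hj : j = f := by omega
      subst hi; subst hj
      constructor
      · simp [hDdef]
      · simp
    | succ m ih =>
      intro i j hid hjf hn hInv1 hInv2
      by_cases hcase : i < d ∧ (j = f ∨ p (i + 1) < q (j + 1))
      · -- p-step: predecessor (i+1, j)
        obtain ⟨hilt, hcase2⟩ := hcase
        have hd1 : i + 1 ≤ d := hilt
        have hInv2' : ∀ j', j < j' → j' ≤ f → p (i + 1) < q j' := by
          intro j' hj' hj'f
          rcases hcase2 with hjef | hlt
          · omega
          · rcases Nat.eq_or_lt_of_le (Nat.succ_le_of_lt hj') with h | h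
            · rw [← h]; exact hlt
            · exact lt_trans hlt (hq_lt (j + 1) j' h hj'f)
        have hInv1' : ∀ i', i + 1 < i' → i' ≤ d → q j < p i' :=
          fun i' h h' => hInv1 i' (by omega) h'
        have IH := ih (i + 1) j hd1 hjf (by omega) hInv1' hInv2'
        have hqp : q j < p (i + 1) := hInv1 (i + 1) (by omega) hd1
        -- i + 1 > v 0
        have hv0i : v 0 + 1 ≤ i + 1 := by
          have hq0j : q 0 ≤ q j := hq_le 0 j (Nat.zero_le j) hjf
          have : p (v 0) < p (i + 1) := by omega
          by_contra hc
          have : p (i + 1) ≤ p (v 0) := hp_le (i + 1) (v 0) (by omega) hv0d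
          omega
        have hui : u (i + 1) = j := by
          rw [hu]
          exact Nat.findGreatest_eq_iff.mpr
            ⟨hjf, fun _ => hqp, fun n hn hn' => not_lt.mpr (hInv2' n hn hn').le⟩
        have hstep : dist (x (p (i + 1))) (x (p i)) ≤ dist (x (p (i + 1))) (x (q j)) := by
          have := hnn_p (i + 1) hv0i hd1
          simpa [hui] using this
        constructor
        · calc dist (x (p i)) (x (q j))
              ≤ dist (x (p i)) (x (p (i + 1))) + dist (x (p (i + 1))) (x (q j)) :=
                dist_triangle _ _ _
            _ ≤ dist (x (p (i + 1))) (x (q j)) + dist (x (p (i + 1))) (x (q j)) := by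
                rw [dist_comm (x (p i))]; linarith [hstep]
            _ ≤ 2 ^ m * D + 2 ^ m * D := by linarith [IH.1]
            _ = 2 ^ (m + 1) * D := by ring
        · calc dist (x (p i)) (x (p d))
              ≤ dist (x (p i)) (x (p (i + 1))) + dist (x (p (i + 1))) (x (p d)) :=
                dist_triangle _ _ _
            _ ≤ 2 ^ m * D + (2 ^ m - 1) * D := by
                rw [dist_comm (x (p i))]
                exact add_le_add (le_trans hstep IH.1) IH.2
            _ = (2 ^ (m + 1) - 1) * D := by ring
      · -- q-step: predecessor (i, j+1)
        have hjlt : j < f := by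
          rcases Nat.lt_or_ge i d with h | h
          · by_contra hc
            have hjf' : j = f := by omega
            exact hcase ⟨h, Or.inl hjf'⟩
          · omega
        have hf1 : j + 1 ≤ f := hjlt
        have hpq' : q (j + 1) < p (i + 1) ∨ i = d := by
          rcases Nat.lt_or_ge i d with h | h
          · left
            have hne : p (i + 1) ≠ q (j + 1) := hdistinct (i + 1) h (j + 1) hf1
            have hnlt : ¬ p (i + 1) < q (j + 1) := by
              intro hc; exact hcase ⟨h, Or.inr hc⟩
            omega
          · right; omega
        have hInv1' : ∀ i', i < i' → i' ≤ d → q (j + 1) < p i' := by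
          intro i' hi' hi'd
          rcases hpq' with h | h
          · rcases Nat.eq_or_lt_of_le (Nat.succ_le_of_lt hi') with heq | hlt
            · rw [← heq]; exact h
            · exact lt_trans h (hp_lt (i + 1) i' hlt hi'd)
          · omega
        have hInv2' : ∀ j', j + 1 < j' → j' ≤ f → p i < q j' :=
          fun j' h h' => hInv2 j' (by omega) h'
        have IH := ih i (j + 1) hid hf1 (by omega) hInv1' hInv2'
        have hpq2 : p i < q (j + 1) := hInv2 (j + 1) (by omega) hf1
        have hvj : v (j + 1) = i := by
          rw [hv]
          exact Nat.findGreatest_eq_iff.mpr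
            ⟨hid, fun _ => hpq2, fun n hn hn' => not_lt.mpr (hInv1' n hn hn').le⟩
        have hstep : dist (x (q (j + 1))) (x (q j)) ≤ dist (x (q (j + 1))) (x (p i)) := by
          have := hnn_q (j + 1) (by omega) hf1
          simpa [hvj] using this
        have hd1 : dist (x (p i)) (x (q j)) ≤ 2 ^ (m + 1) * D := by
          calc dist (x (p i)) (x (q j))
              ≤ dist (x (p i)) (x (q (j + 1))) + dist (x (q (j + 1))) (x (q j)) :=
                dist_triangle _ _ _
            _ ≤ dist (x (p i)) (x (q (j + 1))) + dist (x (q (j + 1))) (x (p i)) := by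
                linarith [hstep]
            _ = dist (x (p i)) (x (q (j + 1))) + dist (x (p i)) (x (q (j + 1))) := by
                rw [dist_comm (x (q (j + 1)))]
            _ ≤ 2 ^ m * D + 2 ^ m * D := by linarith [IH.1]
            _ = 2 ^ (m + 1) * D := by ring
        refine ⟨hd1, ?_⟩
        calc dist (x (p i)) (x (p d)) ≤ (2 ^ m - 1) * D := IH.2
          _ ≤ (2 ^ (m + 1) - 1) * D := by
              apply mul_le_mul_of_nonneg_right _ hD
              have : (2 : ℝ) ^ m ≤ 2 ^ (m + 1) :=
                pow_le_pow_right₀ (by norm_num) (by omega)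
              linarith
  -- apply the key at (v 0, 0)
  have hInv1 : ∀ i', v 0 < i' → i' ≤ d → q 0 < p i' := by
    intro i' h h'
    have hne : p i' ≠ q 0 := hdistinct i' h' 0 (Nat.zero_le f)
    have hnlt : ¬ p i' < q 0 := by
      rw [hv] at h
      exact Nat.findGreatest_is_greatest (P := fun i => p i < q 0) h h'
    omega
  have hInv2 : ∀ j', 0 < j' → j' ≤ f → p (v 0) < q j' := by
    intro j' h h'
    have : q 0 ≤ q j' := hq_le 0 j' (Nat.zero_le j') h'
    omega
  obtain ⟨h1, h2⟩ := key ((d - v 0) + f) (v 0) 0 hv0d (Nat.zero_le f) rfl hInv1 hInv2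
  have hpow : (2 : ℝ) ^ ((d - v 0) + f) ≤ 2 ^ (f + d) :=
    pow_le_pow_right₀ (by norm_num) (by omega)
  constructor
  · calc dist (x (p (v 0))) (x (q 0)) ≤ 2 ^ ((d - v 0) + f) * D := h1
      _ ≤ 2 ^ (f + d) * D := mul_le_mul_of_nonneg_right hpow hD
  · calc dist (x (p (v 0))) (x (p d)) ≤ (2 ^ ((d - v 0) + f) - 1) * D := h2
      _ ≤ 2 ^ (f + d) * D := by
          apply mul_le_mul_of_nonneg_right _ hD
          linarith [hpow]
end
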